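/- Let A, B ⊆ F_q^d and for t ∈ F_q let μ(t) be the number of pairs (a,b) ∈ A×B with ‖a−b‖ = t. Then Σ_{t∈F_q} μ(t)² ≤ |A|²|B|²/q + (|A|/q) Σ_{a∈A} Σ_{s∈F_q^*} |Σ_{b∈B} χ(2s a·b − s‖b‖)|². -/

import Mathlib

open Finset

/-- For `A, B ⊆ F_q^d` and `μ(t) = #{(a,b) ∈ A×B : ‖a−b‖ = t}`,
`∑_t μ(t)² ≤ |A|²|B|²/q + (|A|/q) ∑_{a∈A} ∑_{s≠0} |∑_{b∈B} χ(2s a·b − s‖b‖)|²`. -/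
theorem stmt_11 {F : Type*} [Field F] [Fintype F] [DecidableEq F]
    (hodd : Odd (Fintype.card F))
    (χ : AddChar F ℂ) (hχ : χ ≠ 1)
    (d : ℕ) (A B : Finset (Fin d → F)) :
    ∑ t : F, ((((A ×ˢ B).filter (fun p => ∑ i, (p.1 i - p.2 i) ^ 2 = t)).card : ℝ)) ^ 2 ≤
      (A.card : ℝ) ^ 2 * (B.card : ℝ) ^ 2 / (Fintype.card F) +
        (A.card : ℝ) / (Fintype.card F) *
          ∑ a ∈ A, ∑ s ∈ Finset.univ.filter (fun s : F => s ≠ 0),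
            (‖(∑ b ∈ B,
              χ (2 * s * (∑ i, a i * b i) - s * ∑ i, (b i) ^ 2))‖) ^ 2 := by
  classical
  set q : ℕ := Fintype.card F with hq
  have hq0 : (0:ℝ) < q := by
    have := Fintype.card_pos (α := F); positivity
  set f : (Fin d → F) × (Fin d → F) → F := fun p => ∑ i, (p.1 i - p.2 i) ^ 2 with hf
  set S : F → ℂ := fun s => ∑ p ∈ A ×ˢ B, χ (s * f p) with hS
  have hcharpos : 0 < ringChar F := Nat.pos_of_ne_zero (CharP.ringChar_ne_zero_of_finite F)
  have hconj : ∀ x : F, (starRingEnd ℂ) (χ x) = χ (-x) := fun x => by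
    rw [AddChar.starComp_apply hcharpos, AddChar.inv_apply]
  have hnorm : ∀ x : F, ‖(χ x)‖ = 1 := fun x => by
    exact Complex.norm_eq_one_of_mem_rootsOfUnity (χ.val_mem_rootsOfUnity x hcharpos)
  have horth : ∀ x : F, ∑ s : F, χ (s * x) = if x = 0 then (q:ℂ) else 0 := fun x => by
    rw [AddChar.sum_mulShift x (AddChar.IsPrimitive.of_ne_one hχ)]
    split_ifs <;> simp [hq]
  -- key identity: q * ∑_t μ(t)² = ∑_s |S s|²
  have hN : ∀ t : F, (((A ×ˢ B).filter (fun p => f p = t)).card : ℂ)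
      = ∑ p ∈ A ×ˢ B, if f p = t then (1:ℂ) else 0 := by
    intro t
    rw [Finset.card_filter]
    push_cast
    simp [apply_ite (Nat.cast : ℕ → ℂ)]
  have C : (q:ℂ) * ∑ t : F, (((A ×ˢ B).filter (fun p => f p = t)).card : ℂ)^2
      = ∑ s : F, S s * (starRingEnd ℂ) (S s) := by
    have hRs : ∀ s : F, S s * (starRingEnd ℂ) (S s)
        = ∑ p ∈ A ×ˢ B, ∑ p' ∈ A ×ˢ B, χ (s * (f p - f p')) := by
      intro s
      simp only [hS]
      rw [map_sum, Finset.sum_mul_sum]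
      refine Finset.sum_congr rfl fun p _ => Finset.sum_congr rfl fun p' _ => ?_
      rw [hconj, ← AddChar.map_add_eq_mul]
      congr 1
      ring
    calc (q:ℂ) * ∑ t : F, (((A ×ˢ B).filter (fun p => f p = t)).card : ℂ)^2
        = (q:ℂ) * ∑ p ∈ A ×ˢ B, ∑ p' ∈ A ×ˢ B, if f p = f p' then (1:ℂ) else 0 := by
          congr 1
          simp_rw [hN, sq, Finset.sum_mul_sum]
          rw [Finset.sum_comm]
          refine Finset.sum_congr rfl fun p _ => ?_
          rw [Finset.sum_comm]
          refine Finset.sum_congr rfl fun p' _ => ?_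
          simp [ite_mul, Finset.sum_ite_eq, eq_comm]
      _ = ∑ p ∈ A ×ˢ B, ∑ p' ∈ A ×ˢ B, if f p = f p' then (q:ℂ) else 0 := by
          rw [Finset.mul_sum]
          refine Finset.sum_congr rfl fun p _ => ?_
          rw [Finset.mul_sum]
          refine Finset.sum_congr rfl fun p' _ => ?_
          simp [mul_ite]
      _ = ∑ s : F, S s * (starRingEnd ℂ) (S s) := by
          simp_rw [hRs]
          symm
          rw [Finset.sum_comm]
          refine Finset.sum_congr rfl fun p _ => ?_
          rw [Finset.sum_comm]
          refine Finset.sum_congr rfl fun p' _ => ?_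
          rw [horth]
          simp only [sub_eq_zero]
  have key : (q:ℝ) * ∑ t : F, (((A ×ˢ B).filter (fun p => f p = t)).card : ℝ)^2
      = ∑ s : F, (‖(S s)‖)^2 := by
    have h2 : (((q:ℝ) * ∑ t : F, (((A ×ˢ B).filter (fun p => f p = t)).card : ℝ)^2 : ℝ) : ℂ)
        = ((∑ s : F, (‖(S s)‖)^2 : ℝ) : ℂ) := by
      push_cast
      rw [C]
      refine Finset.sum_congr rfl fun s _ => ?_
      rw [Complex.mul_conj, ← Complex.sq_norm]
      push_cast
      ring
    exact_mod_cast h2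
  -- s = 0 term
  have hS0 : (‖(S 0)‖)^2 = (A.card : ℝ)^2 * (B.card : ℝ)^2 := by
    have : S 0 = ((A.card * B.card : ℕ) : ℂ) := by
      simp [hS, Finset.card_product]
    rw [this, Complex.norm_natCast]
    push_cast
    ring
  -- expansion of the quadratic form
  have hexp : ∀ a b : Fin d → F,
      f (a, b) = (∑ i, a i ^ 2) + -(2 * (∑ i, a i * b i) - ∑ i, (b i) ^ 2) := by
    intro a b
    simp only [hf]
    rw [Finset.mul_sum, ← Finset.sum_sub_distrib, ← Finset.sum_neg_distrib,
      ← Finset.sum_add_distrib]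
    exact Finset.sum_congr rfl fun i _ => by ring
  -- pointwise bound
  have hbound : ∀ s : F, (‖(S s)‖)^2
      ≤ (A.card : ℝ) * ∑ a ∈ A, (‖(∑ b ∈ B,
          χ (2 * s * (∑ i, a i * b i) - s * ∑ i, (b i) ^ 2))‖)^2 := by
    intro s
    have habs : ‖(S s)‖ ≤ ∑ a ∈ A, ‖(∑ b ∈ B,
        χ (2 * s * (∑ i, a i * b i) - s * ∑ i, (b i) ^ 2))‖ := by
      have hfac : S s = ∑ a ∈ A, χ (s * ∑ i, a i ^ 2) *
          ∑ b ∈ B, χ (-(2 * s * (∑ i, a i * b i) - s * ∑ i, (b i) ^ 2)) := by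
        simp only [hS]
        rw [Finset.sum_product]
        refine Finset.sum_congr rfl fun a _ => ?_
        rw [Finset.mul_sum]
        refine Finset.sum_congr rfl fun b _ => ?_
        rw [← AddChar.map_add_eq_mul]
        congr 1
        rw [hexp a b]
        ring
      rw [hfac]
      refine (norm_sum_le _ _).trans ?_
      refine Finset.sum_le_sum fun a _ => ?_
      rw [norm_mul, hnorm, one_mul]
      have : ∑ b ∈ B, χ (-(2 * s * (∑ i, a i * b i) - s * ∑ i, (b i) ^ 2))
          = (starRingEnd ℂ) (∑ b ∈ B, χ (2 * s * (∑ i, a i * b i) - s * ∑ i, (b i) ^ 2)) := by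
        rw [map_sum]
        exact Finset.sum_congr rfl fun b _ => (hconj _).symm
      rw [this, Complex.norm_conj]
    calc (‖(S s)‖)^2
        ≤ (∑ a ∈ A, ‖(∑ b ∈ B,
            χ (2 * s * (∑ i, a i * b i) - s * ∑ i, (b i) ^ 2))‖)^2 :=
          pow_le_pow_left₀ (norm_nonneg _) habs 2
      _ ≤ (A.card : ℝ) * ∑ a ∈ A, (‖(∑ b ∈ B,
            χ (2 * s * (∑ i, a i * b i) - s * ∑ i, (b i) ^ 2))‖)^2 :=
          sq_sum_le_card_mul_sum_sq
  -- assemble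
  have hsplit : ∑ s : F, (‖(S s)‖)^2
      = (‖(S 0)‖)^2 + ∑ s ∈ (univ : Finset F).erase 0, (‖(S s)‖)^2 :=
    (Finset.add_sum_erase _ _ (mem_univ 0)).symm
  have hfil : (Finset.univ.filter (fun s : F => s ≠ 0)) = (univ : Finset F).erase 0 :=
    Finset.filter_ne' _ _
  rw [hfil]
  have hmain : ∑ t : F, (((A ×ˢ B).filter (fun p => f p = t)).card : ℝ)^2
      = (∑ s : F, (‖(S s)‖)^2) / q := by
    rw [eq_div_iff hq0.ne']
    linarith [key]
  rw [hmain, hsplit, hS0, add_div]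
  gcongr (_ + ?_)
  calc (∑ s ∈ (univ : Finset F).erase 0, (‖(S s)‖)^2) / q
      ≤ (∑ s ∈ (univ : Finset F).erase 0, (A.card : ℝ) * ∑ a ∈ A, (‖(∑ b ∈ B,
          χ (2 * s * (∑ i, a i * b i) - s * ∑ i, (b i) ^ 2))‖)^2) / q := by
        gcongr
        exact hbound _
    _ = (A.card : ℝ) / q * ∑ a ∈ A, ∑ s ∈ (univ : Finset F).erase 0,
          (‖(∑ b ∈ B, χ (2 * s * (∑ i, a i * b i) - s * ∑ i, (b i) ^ 2))‖)^2 := by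
        rw [← Finset.mul_sum, Finset.sum_comm]
        ring
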